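/- Let φ ∈ G^∨ be a linear functional on a free module G ≅ R^n over a commutative ring R. If the components φ_1,…,φ_n of φ generate the unit ideal of R (equivalently, φ is surjective), then the Koszul complex Kosz(φ) is exact in every degree. -/
import Mathlib


open ExteriorAlgebra

/-- Let `φ ∈ G^∨` be a linear functional on `G = Rⁿ` whose components
`φ₁,…,φₙ` (i.e. the values `φ(eᵢ)` on the standard basis) generate the unit ideal of `R`.
Then the Koszul complex `Kosz(φ)`, with differentials given by contraction with `φ`,
is exact in every degree: every cycle in `Λ^p G` is a boundary from `Λ^{p+1} G`
(for `p = 0` this includes surjectivity of `Λ^1 G → Λ^0 G = R`). -/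
theorem koszul_exact_of_span_eq_top
    (R : Type*) [CommRing R] (n : ℕ) (φ : Module.Dual R (Fin n → R))
    (h : Ideal.span (Set.range fun i : Fin n => φ (Pi.single i 1)) = ⊤) :
    ∀ (p : ℕ), ∀ x ∈ ⋀[R]^p (Fin n → R),
      CliffordAlgebra.contractLeft (Q := (0 : QuadraticForm R (Fin n → R))) φ x = 0 →
      ∃ y ∈ ⋀[R]^(p+1) (Fin n → R),
        CliffordAlgebra.contractLeft (Q := (0 : QuadraticForm R (Fin n → R))) φ y = x := by
  have h1 : (1 : R) ∈ Ideal.span (Set.range fun i : Fin n => φ (Pi.single i 1)) := by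
    rw [h]; trivial
  obtain ⟨c, hc⟩ := (Submodule.mem_span_range_iff_exists_fun R).1 h1
  set g : Fin n → R := ∑ i, c i • (Pi.single i 1 : Fin n → R) with hg_def
  have hg : φ g = 1 := by
    rw [hg_def, map_sum]
    simpa [smul_eq_mul] using hc
  intro p x hx hdx
  refine ⟨ExteriorAlgebra.ι R g * x, ?_, ?_⟩
  · have : ExteriorAlgebra.ι R g * x ∈
        LinearMap.range (ExteriorAlgebra.ι R : (Fin n → R) →ₗ[R] _) *
          LinearMap.range (ExteriorAlgebra.ι R : (Fin n → R) →ₗ[R] _) ^ p :=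
      Submodule.mul_mem_mul (LinearMap.mem_range_self _ g) hx
    rwa [← pow_succ'] at this
  · rw [CliffordAlgebra.contractLeft_ι_mul, hdx, hg, mul_zero, sub_zero, one_smul]
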